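/- Let ? = (?, η, μ) be a monad and ! = (!, ε, δ) a comonad on a category C, together with a distributive law d : !? ⇒ ?! of ! over ?. Then the comonad ! lifts to a comonad on the Kleisli category C^?, the monad ? lifts to a monad on the co-Kleisli category C_!, and the resulting bi-Kleisli categories (C_!)^? and (C^?)_! are equivalent (indeed isomorphic), with hom-sets C(!A, ?B). -/

import Mathlib

open CategoryTheory

universe v u

/-- Mathlib's `Kleisli` category as of December 2024: a type synonym for `C`,
with morphisms `X ⟶ T.obj Y`. -/
def OldKleisli {C : Type u} [Category.{v} C] (_T : Monad C) :=
  C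

instance OldKleisli.category {C : Type u} [Category.{v} C] (T : Monad C) :
    Category.{v} (OldKleisli T) where
  Hom := fun X Y : C => X ⟶ (T : C ⥤ C).obj Y
  id X := T.η.app X
  comp {_} {_} {Z} f g := f ≫ (T : C ⥤ C).map g ≫ T.μ.app Z
  id_comp {X} {Y} f := by
    exact (fun (X Y : C) (f : X ⟶ T.obj Y) =>
      (show T.η.app X ≫ T.map f ≫ T.μ.app Y = f by
        rw [← T.η.naturality_assoc f, T.left_unit]; apply Category.comp_id)) X Y f
  comp_id {X} {Y} f := by
    exact (fun (X Y : C) (f : X ⟶ T.obj Y) =>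
      (show f ≫ T.map (T.η.app Y) ≫ T.μ.app Y = f by simp)) X Y f
  assoc {X} {Y} {Z} {W} f g h := by
    exact (fun (X Y Z W : C) (f : X ⟶ T.obj Y) (g : Y ⟶ T.obj Z) (h : Z ⟶ T.obj W) =>
      (show (f ≫ T.map g ≫ T.μ.app Z) ≫ T.map h ≫ T.μ.app W
          = f ≫ T.map (g ≫ T.map h ≫ T.μ.app W) ≫ T.μ.app W by
        simp only [Functor.map_comp, Category.assoc, Monad.assoc]
        erw [T.μ.naturality_assoc])) X Y Z W f g h

/-- Mathlib's `Cokleisli` category as of December 2024: a type synonym for `C`,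
with morphisms `U.obj X ⟶ Y`. -/
def OldCokleisli {C : Type u} [Category.{v} C] (_U : Comonad C) :=
  C

instance OldCokleisli.category {C : Type u} [Category.{v} C] (U : Comonad C) :
    Category.{v} (OldCokleisli U) where
  Hom := fun X Y : C => (U : C ⥤ C).obj X ⟶ Y
  id X := U.ε.app X
  comp {X} {_} {_} f g := U.δ.app X ≫ (U : C ⥤ C).map f ≫ g
  id_comp {X} {Y} f := by
    exact (fun (X Y : C) (f : U.obj X ⟶ Y) =>
      (show U.δ.app X ≫ U.map (U.ε.app X) ≫ f = f by rw [U.right_counit_assoc])) X Y f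
  comp_id {X} {Y} f := by
    exact (fun (X Y : C) (f : U.obj X ⟶ Y) =>
      (show U.δ.app X ≫ U.map f ≫ U.ε.app Y = f by simp)) X Y f
  assoc {X} {Y} {Z} {W} f g h := by
    exact (fun (X Y Z W : C) (f : U.obj X ⟶ Y) (g : U.obj Y ⟶ Z) (h : U.obj Z ⟶ W) =>
      (show U.δ.app X ≫ U.map (U.δ.app X ≫ U.map f ≫ g) ≫ h
          = U.δ.app X ≫ U.map f ≫ U.δ.app Y ≫ U.map g ≫ h by
        simp only [Functor.map_comp, ← Category.assoc, U.δ.naturality_assoc, Functor.comp_map,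
          U.coassoc])) X Y Z W f g h

section Aux
variable {C : Type u} [Category.{v} C]

lemma coext (U : Comonad C) {X Y Z : C} (f : U.obj X ⟶ Y) (g : Y ⟶ Z) :
    U.δ.app X ≫ U.map f ≫ U.ε.app Y ≫ g = f ≫ g := by
  have h : U.map f ≫ U.ε.app Y = U.ε.app (U.obj X) ≫ f := by
    simpa using U.ε.naturality f
  rw [reassoc_of% h, U.left_counit_assoc]

lemma klext (T : Monad C) {X Y Z : C} (f : X ⟶ Y) (g : Y ⟶ T.obj Z) :
    (f ≫ T.η.app Y) ≫ T.map g ≫ T.μ.app Z = f ≫ g := by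
  have h : g ≫ T.η.app (T.obj Z) = T.η.app Y ≫ T.map g := by
    simpa using T.η.naturality g
  rw [Category.assoc, ← reassoc_of% h]
  simp

variable (T : Monad C) (U : Comonad C)
    (d : (T.toFunctor ⋙ U.toFunctor) ⟶ (U.toFunctor ⋙ T.toFunctor))
    (h1 : ∀ A : C, d.app A ≫ T.map (U.ε.app A) = U.ε.app (T.obj A))
    (h2 : ∀ A : C, d.app A ≫ T.map (U.δ.app A)
        = U.δ.app (T.obj A) ≫ U.map (d.app A) ≫ d.app (U.obj A))
    (h3 : ∀ A : C, U.map (T.η.app A) ≫ d.app A = T.η.app (U.obj A))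
    (h4 : ∀ A : C, U.map (T.μ.app A) ≫ d.app A
        = d.app (T.obj A) ≫ T.map (d.app A) ≫ T.μ.app (U.obj A))

/-- The lifted monad on the co-OldKleisli category. -/
def liftMonad : Monad (OldCokleisli U) where
  obj A := (T.obj A : OldCokleisli U)
  map {A B} f := (d.app A ≫ T.map f : U.obj (T.obj A) ⟶ T.obj B)
  map_id A := h1 A
  map_comp {A B Z : C} f g := by
    change d.app A ≫ T.map (U.δ.app A ≫ U.map f ≫ g)
      = U.δ.app (T.obj A) ≫ U.map (d.app A ≫ T.map f) ≫ (d.app B ≫ T.map g)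
    have nat : U.map (T.map f) ≫ d.app B = d.app (U.obj A) ≫ T.map (U.map f) :=
      d.naturality f
    simp only [Functor.map_comp, Category.assoc]
    rw [reassoc_of% (h2 A), reassoc_of% nat]
  η :=
    { app := fun A => (U.ε.app A ≫ T.η.app A : U.obj A ⟶ T.obj A)
      naturality := fun (A B : C) f => by
        change U.δ.app A ≫ U.map f ≫ U.ε.app B ≫ T.η.app B
          = U.δ.app A ≫ U.map (U.ε.app A ≫ T.η.app A) ≫ (d.app A ≫ T.map f)
        rw [coext U (X := (A : C)) (Y := (B : C)) f (T.η.app B)]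
        simp only [Functor.map_comp, Category.assoc]
        rw [reassoc_of% (h3 A), U.right_counit_assoc]
        simpa using T.η.naturality f }
  μ :=
    { app := fun A => (U.ε.app (T.obj (T.obj A)) ≫ T.μ.app A :
        U.obj (T.obj (T.obj A)) ⟶ T.obj A)
      naturality := fun (A B : C) f => by
        change U.δ.app (T.obj (T.obj A)) ≫
            U.map (d.app (T.obj A) ≫ T.map (d.app A ≫ T.map f)) ≫
            U.ε.app (T.obj (T.obj B)) ≫ T.μ.app B
          = U.δ.app (T.obj (T.obj A)) ≫
            U.map (U.ε.app (T.obj (T.obj A)) ≫ T.μ.app A) ≫ (d.app A ≫ T.map f)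
        rw [coext U (Y := T.obj (T.obj B)) _ (T.μ.app B)]
        simp only [Functor.map_comp, Category.assoc]
        rw [U.right_counit_assoc, reassoc_of% (h4 A)]
        have hμ : T.map (T.map f) ≫ T.μ.app B = T.μ.app (U.obj A) ≫ T.map f := by
          simpa using T.μ.naturality f
        rw [hμ] }
  left_unit := fun (A : C) => by
    change U.δ.app (T.obj A) ≫ U.map (U.ε.app (T.obj A) ≫ T.η.app (T.obj A)) ≫
        U.ε.app (T.obj (T.obj A)) ≫ T.μ.app A = U.ε.app (T.obj A)
    rw [coext U (Y := T.obj (T.obj A)) _ (T.μ.app A)]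
    rw [Category.assoc, T.left_unit, Category.comp_id]
  right_unit := fun (A : C) => by
    change U.δ.app (T.obj A) ≫ U.map (d.app A ≫ T.map (U.ε.app A ≫ T.η.app A)) ≫
        U.ε.app (T.obj (T.obj A)) ≫ T.μ.app A = U.ε.app (T.obj A)
    rw [coext U (Y := T.obj (T.obj A)) _ (T.μ.app A)]
    simp only [Functor.map_comp, Category.assoc, T.right_unit, Category.comp_id]
    exact h1 A
  assoc := fun (A : C) => by
    change U.δ.app (T.obj (T.obj (T.obj A))) ≫
        U.map (d.app (T.obj (T.obj A)) ≫
          T.map (U.ε.app (T.obj (T.obj A)) ≫ T.μ.app A)) ≫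
        U.ε.app (T.obj (T.obj A)) ≫ T.μ.app A
      = U.δ.app (T.obj (T.obj (T.obj A))) ≫
        U.map (U.ε.app (T.obj (T.obj (T.obj A))) ≫ T.μ.app (T.obj A)) ≫
        U.ε.app (T.obj (T.obj A)) ≫ T.μ.app A
    rw [coext U (Y := T.obj (T.obj A)) _ (T.μ.app A), coext U (Y := T.obj (T.obj A)) _ (T.μ.app A)]
    simp only [Functor.map_comp, Category.assoc]
    rw [reassoc_of% (h1 (T.obj (T.obj A)))]
    rw [T.assoc]

/-- The lifted comonad on the OldKleisli category. -/
def liftComonad : Comonad (OldKleisli T) where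
  obj A := (U.obj A : OldKleisli T)
  map {A B} f := (U.map f ≫ d.app B : U.obj A ⟶ T.obj (U.obj B))
  map_id A := h3 A
  map_comp {A B Z : C} f g := by
    change U.map (f ≫ T.map g ≫ T.μ.app Z) ≫ d.app Z
      = (U.map f ≫ d.app B) ≫ T.map (U.map g ≫ d.app Z) ≫ T.μ.app (U.obj Z)
    have nat : U.map (T.map g) ≫ d.app (T.obj Z) = d.app B ≫ T.map (U.map g) :=
      d.naturality g
    simp only [Functor.map_comp, Category.assoc]
    rw [h4 Z, reassoc_of% nat]
  ε :=
    { app := fun A => (U.ε.app A ≫ T.η.app A : U.obj A ⟶ T.obj A)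
      naturality := fun (A B : C) f => by
        change (U.map f ≫ d.app B) ≫ T.map (U.ε.app B ≫ T.η.app B) ≫ T.μ.app B
          = (U.ε.app A ≫ T.η.app A) ≫ T.map f ≫ T.μ.app B
        rw [klext T (Y := (A : C)) (U.ε.app A) f]
        simp only [Functor.map_comp, Category.assoc, T.right_unit, Category.comp_id]
        rw [h1 B]
        simpa using U.ε.naturality f }
  δ :=
    { app := fun A => (U.δ.app A ≫ T.η.app (U.obj (U.obj A)) :
        U.obj A ⟶ T.obj (U.obj (U.obj A)))
      naturality := fun (A B : C) f => by
        change (U.map f ≫ d.app B) ≫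
            T.map (U.δ.app B ≫ T.η.app (U.obj (U.obj B))) ≫ T.μ.app (U.obj (U.obj B))
          = (U.δ.app A ≫ T.η.app (U.obj (U.obj A))) ≫
            T.map (U.map (U.map f ≫ d.app B) ≫ d.app (U.obj B)) ≫
            T.μ.app (U.obj (U.obj B))
        rw [klext T (Y := U.obj (U.obj A)) (U.δ.app A) _]
        simp only [Functor.map_comp, Category.assoc, T.right_unit, Category.comp_id]
        rw [reassoc_of% (h2 B), reassoc_of% (U.δ.naturality f)]
        simp }
  coassoc := fun (A : C) => by
    change (U.δ.app A ≫ T.η.app (U.obj (U.obj A))) ≫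
        T.map (U.map (U.δ.app A ≫ T.η.app (U.obj (U.obj A))) ≫ d.app (U.obj (U.obj A))) ≫
        T.μ.app _
      = (U.δ.app A ≫ T.η.app (U.obj (U.obj A))) ≫
        T.map (U.δ.app (U.obj A) ≫ T.η.app _) ≫ T.μ.app _
    rw [klext T (Y := U.obj (U.obj A)) (U.δ.app A) _, klext T (Y := U.obj (U.obj A)) (U.δ.app A) _]
    simp only [Functor.map_comp, Category.assoc]
    rw [h3 (U.obj (U.obj A))]
    rw [reassoc_of% U.coassoc A]
  left_counit := fun (A : C) => by
    change (U.δ.app A ≫ T.η.app (U.obj (U.obj A))) ≫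
        T.map (U.ε.app (U.obj A) ≫ T.η.app (U.obj A)) ≫ T.μ.app (U.obj A)
      = T.η.app (U.obj A)
    rw [klext T (Y := U.obj (U.obj A)) (U.δ.app A) _]
    rw [U.left_counit_assoc]
  right_counit := fun (A : C) => by
    change (U.δ.app A ≫ T.η.app (U.obj (U.obj A))) ≫
        T.map (U.map (U.ε.app A ≫ T.η.app A) ≫ d.app A) ≫ T.μ.app (U.obj A)
      = T.η.app (U.obj A)
    rw [klext T (Y := U.obj (U.obj A)) (U.δ.app A) _]
    simp only [Functor.map_comp, Category.assoc]
    rw [h3 A, U.right_counit_assoc]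

lemma biKl_comp_eq {A B Z : C} (f : U.obj A ⟶ T.obj B) (g : U.obj B ⟶ T.obj Z) :
    @CategoryStruct.comp (OldKleisli (liftMonad T U d h1 h2 h3 h4)) _ A B Z f g
    = @CategoryStruct.comp (OldCokleisli (liftComonad T U d h1 h2 h3 h4)) _ A B Z f g := by
  change U.δ.app A ≫ U.map f ≫ U.δ.app (T.obj B) ≫ U.map (d.app B ≫ T.map g) ≫
      U.ε.app (T.obj (T.obj Z)) ≫ T.μ.app Z
    = (U.δ.app A ≫ T.η.app (U.obj (U.obj A))) ≫
      T.map ((U.map f ≫ d.app B) ≫ T.map g ≫ T.μ.app Z) ≫ T.μ.app Z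
  rw [coext U (Y := T.obj (T.obj Z)) _ (T.μ.app Z)]
  rw [klext T (Y := U.obj (U.obj A)) (U.δ.app A) _]
  simp

/-- The isomorphism of bi-OldKleisli categories, forward direction. -/
def biKlF : OldKleisli (liftMonad T U d h1 h2 h3 h4) ⥤ OldCokleisli (liftComonad T U d h1 h2 h3 h4) where
  obj A := A
  map {A B} f := f
  map_id A := rfl
  map_comp {A B Z : C} f g := biKl_comp_eq T U d h1 h2 h3 h4 f g

/-- The isomorphism of bi-OldKleisli categories, backward direction. -/
def biKlG : OldCokleisli (liftComonad T U d h1 h2 h3 h4) ⥤ OldKleisli (liftMonad T U d h1 h2 h3 h4) where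
  obj A := A
  map {A B} f := f
  map_id A := rfl
  map_comp {A B Z : C} f g := (biKl_comp_eq T U d h1 h2 h3 h4 f g).symm

/-- The equivalence of bi-OldKleisli categories. -/
def biKlEquiv : OldKleisli (liftMonad T U d h1 h2 h3 h4) ≌ OldCokleisli (liftComonad T U d h1 h2 h3 h4) :=
  CategoryTheory.Equivalence.mk (biKlF T U d h1 h2 h3 h4) (biKlG T U d h1 h2 h3 h4)
    (NatIso.ofComponents (fun X => Iso.refl X) (fun {X Y} f => by
      have h : (biKlF T U d h1 h2 h3 h4 ⋙ biKlG T U d h1 h2 h3 h4).map f = f := rfl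
      simp only [Functor.id_map, Iso.refl_hom, h]
      exact (Category.comp_id f).trans (Category.id_comp f).symm))
    (NatIso.ofComponents (fun X => Iso.refl X) (fun {X Y} f => by
      have h : (biKlG T U d h1 h2 h3 h4 ⋙ biKlF T U d h1 h2 h3 h4).map f = f := rfl
      simp only [Functor.id_map, Iso.refl_hom, h]
      exact (Category.comp_id f).trans (Category.id_comp f).symm))

end Aux

/-- Let `T = (?, η, μ)` be a monad and `U = (!, ε, δ)` a comonad on a
category `C`, together with a distributive law `d : !? ⇒ ?!` of `!` over `?`
(satisfying `?ε ∘ d = ε?`, `?δ ∘ d = d! ∘ !d ∘ δ?`, `d ∘ !η = η!`, and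
`d ∘ !μ = μ! ∘ ?d ∘ d?`). Then the comonad `!` lifts to a comonad on the OldKleisli
category `C^?`, the monad `?` lifts to a monad on the co-OldKleisli category `C_!`, and
the resulting bi-OldKleisli categories `(C_!)^?` and `(C^?)_!` are equivalent (indeed
isomorphic), with hom-sets `C(!A, ?B)`. -/
theorem distributive_law_biKleisli
    {C : Type u} [Category.{v} C]
    (T : Monad C) (U : Comonad C)
    (d : (T.toFunctor ⋙ U.toFunctor) ⟶ (U.toFunctor ⋙ T.toFunctor))
    (h1 : ∀ A : C, d.app A ≫ T.map (U.ε.app A) = U.ε.app (T.obj A))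
    (h2 : ∀ A : C, d.app A ≫ T.map (U.δ.app A)
        = U.δ.app (T.obj A) ≫ U.map (d.app A) ≫ d.app (U.obj A))
    (h3 : ∀ A : C, U.map (T.η.app A) ≫ d.app A = T.η.app (U.obj A))
    (h4 : ∀ A : C, U.map (T.μ.app A) ≫ d.app A
        = d.app (T.obj A) ≫ T.map (d.app A) ≫ T.μ.app (U.obj A)) :
    -- the monad ? lifts to the co-OldKleisli category C_! , the comonad ! lifts to the
    -- OldKleisli category C^? (acting as ? and ! on objects), and the two bi-OldKleisli
    -- categories are equivalent, with hom-sets C(!A, ?B)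
    ∃ (T' : Monad (OldCokleisli U)) (U' : Comonad (OldKleisli T)),
      (∀ A : C, T'.obj (show OldCokleisli U from A) = (show OldCokleisli U from T.obj A)) ∧
      (∀ A : C, U'.obj (show OldKleisli T from A) = (show OldKleisli T from U.obj A)) ∧
      -- hom-sets of the bi-OldKleisli category (C_!)^? are C(!A, ?B)
      (∀ A B : C,
        ((show OldKleisli T' from (show OldCokleisli U from A)) ⟶
            (show OldKleisli T' from (show OldCokleisli U from B)))
          = (U.obj A ⟶ T.obj B)) ∧
      -- hom-sets of the bi-OldKleisli category (C^?)_! are C(!A, ?B)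
      (∀ A B : C,
        ((show OldCokleisli U' from (show OldKleisli T from A)) ⟶
            (show OldCokleisli U' from (show OldKleisli T from B)))
          = (U.obj A ⟶ T.obj B)) ∧
      Nonempty (OldKleisli T' ≌ OldCokleisli U') := by
  exact ⟨liftMonad T U d h1 h2 h3 h4, liftComonad T U d h1 h2 h3 h4,
    fun A => rfl, fun A => rfl, fun A B => rfl, fun A B => rfl,
    ⟨biKlEquiv T U d h1 h2 h3 h4⟩⟩
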